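/- In quantum theory there is no broadcasting channel for a qubit: there is no completely positive trace-preserving map D : M_2(ℂ) → M_2(ℂ)⊗M_2(ℂ) such that both partial traces of D(ρ) equal ρ for every density matrix ρ. Consequently, no two unitary (more generally, left-invertible) quantum channels with input M_2(ℂ) are strongly compatible. -/

import Mathlib

open scoped ComplexOrder

/-- Square complex matrices indexed by `α`. -/
abbrev Mat (α : Type) := Matrix α α ℂ

/-- Partial trace over the second tensor factor. -/
noncomputable def ptr2 {α β : Type} [Fintype β] (M : Mat (α × β)) : Mat α :=
  Matrix.of fun i j => ∑ k : β, M (i, k) (j, k)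

/-- Partial trace over the first tensor factor. -/
noncomputable def ptr1 {α β : Type} [Fintype α] (M : Mat (α × β)) : Mat β :=
  Matrix.of fun i j => ∑ k : α, M (k, i) (k, j)

/-- The amplification `id_n ⊗ D` of a map on matrices, acting blockwise. -/
noncomputable def amp {α β : Type} (n : ℕ) (D : Mat α →ₗ[ℂ] Mat β)
    (M : Mat (Fin n × α)) : Mat (Fin n × β) :=
  Matrix.of fun pq rs =>
    D (Matrix.of fun i j => M (pq.1, i) (rs.1, j)) pq.2 rs.2

/-- Complete positivity: all amplifications preserve positive semidefiniteness. -/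
def IsCompletelyPositive {α β : Type} [Fintype α] [Fintype β]
    (D : Mat α →ₗ[ℂ] Mat β) : Prop :=
  ∀ (n : ℕ) (M : Mat (Fin n × α)), M.PosSemidef → (amp n D M).PosSemidef

/-- A quantum channel: completely positive and trace preserving. -/
def IsQChannel {α β : Type} [Fintype α] [Fintype β]
    (D : Mat α →ₗ[ℂ] Mat β) : Prop :=
  IsCompletelyPositive D ∧ ∀ M : Mat α, (D M).trace = M.trace

/-- A left-invertible channel: some channel undoes it. -/
def QLeftInvertible {α β : Type} [Fintype α] [Fintype β]
    (V : Mat α →ₗ[ℂ] Mat β) : Prop :=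
  ∃ Vt : Mat β →ₗ[ℂ] Mat α, IsQChannel Vt ∧ ∀ ρ : Mat α, Vt (V ρ) = ρ

set_option linter.unusedSectionVars false
set_option linter.unreachableTactic false
set_option linter.unusedTactic false
set_option maxHeartbeats 1000000

namespace NB
open Matrix
variable {α β γ δ : Type} [Fintype α] [Fintype β] [Fintype γ] [Fintype δ]

noncomputable def bapp (D : Mat α →ₗ[ℂ] Mat β) (M : Mat (γ × α)) : Mat (γ × β) :=
  Matrix.of fun pq rs => D (Matrix.of fun i j => M (pq.1, i) (rs.1, j)) pq.2 rs.2
noncomputable def sapp (D : Mat α →ₗ[ℂ] Mat β) (M : Mat (α × γ)) : Mat (β × γ) :=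
  Matrix.of fun pq rs => D (Matrix.of fun i j => M (i, pq.2) (j, rs.2)) pq.1 rs.1

noncomputable def bappL (D : Mat α →ₗ[ℂ] Mat β) : Mat (γ × α) →ₗ[ℂ] Mat (γ × β) where
  toFun := bapp D
  map_add' M N := by
    ext pq rs
    have h : (Matrix.of fun i j => (M + N) (pq.1, i) (rs.1, j)) =
        (Matrix.of fun i j => M (pq.1, i) (rs.1, j)) +
        (Matrix.of fun i j => N (pq.1, i) (rs.1, j)) := rfl
    show D (Matrix.of fun i j => (M + N) (pq.1, i) (rs.1, j)) pq.2 rs.2 = _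
    rw [h, map_add]; rfl
  map_smul' c M := by
    ext pq rs
    have h : (Matrix.of fun i j => (c • M) (pq.1, i) (rs.1, j)) =
        c • (Matrix.of fun i j => M (pq.1, i) (rs.1, j)) := rfl
    show D (Matrix.of fun i j => (c • M) (pq.1, i) (rs.1, j)) pq.2 rs.2 = _
    rw [h, D.map_smul]; rfl

noncomputable def sappL (D : Mat α →ₗ[ℂ] Mat β) : Mat (α × γ) →ₗ[ℂ] Mat (β × γ) where
  toFun := sapp D
  map_add' M N := by
    ext pq rs
    have h : (Matrix.of fun i j => (M + N) (i, pq.2) (j, rs.2)) =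
        (Matrix.of fun i j => M (i, pq.2) (j, rs.2)) +
        (Matrix.of fun i j => N (i, pq.2) (j, rs.2)) := rfl
    show D (Matrix.of fun i j => (M + N) (i, pq.2) (j, rs.2)) pq.1 rs.1 = _
    rw [h, map_add]; rfl
  map_smul' c M := by
    ext pq rs
    have h : (Matrix.of fun i j => (c • M) (i, pq.2) (j, rs.2)) =
        c • (Matrix.of fun i j => M (i, pq.2) (j, rs.2)) := rfl
    show D (Matrix.of fun i j => (c • M) (i, pq.2) (j, rs.2)) pq.1 rs.1 = _
    rw [h, D.map_smul]; rfl

lemma bappL_apply (D : Mat α →ₗ[ℂ] Mat β) (M : Mat (γ × α)) : bappL D M = bapp D M := rfl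
lemma sappL_apply (D : Mat α →ₗ[ℂ] Mat β) (M : Mat (α × γ)) : sappL D M = sapp D M := rfl

-- composition at amp level is definitional
example (n : ℕ) (L1 : Mat α →ₗ[ℂ] Mat β) (L2 : Mat β →ₗ[ℂ] Mat γ) (M : Mat (Fin n × α)) :
    amp n (L2 ∘ₗ L1) M = amp n L2 (amp n L1 M) := rfl

lemma cp_comp {L1 : Mat α →ₗ[ℂ] Mat β} {L2 : Mat β →ₗ[ℂ] Mat γ}
    (h2 : IsCompletelyPositive L2) (h1 : IsCompletelyPositive L1) :
    IsCompletelyPositive (L2 ∘ₗ L1) := fun n M hM => h2 n _ (h1 n M hM)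

-- amp of bappL as reindexed bapp: definitional?
example (n : ℕ) (D : Mat α →ₗ[ℂ] Mat β) (M : Mat (Fin n × (γ × α))) :
    amp n (bappL (γ := γ) D) M =
      (bapp (γ := Fin n × γ) D
        (M.submatrix (fun x => (x.1.1, (x.1.2, x.2))) (fun x => (x.1.1, (x.1.2, x.2))))).submatrix
        (fun x => ((x.1, x.2.1), x.2.2)) (fun x => ((x.1, x.2.1), x.2.2)) := rfl

example (n : ℕ) (D : Mat α →ₗ[ℂ] Mat β) (M : Mat (Fin n × (α × γ))) :
    amp n (sappL (γ := γ) D) M =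
      (sapp (γ := Fin n × γ) D
        (M.submatrix (fun x => (x.2.1, (x.1, x.2.2))) (fun x => (x.2.1, (x.1, x.2.2))))).submatrix
        (fun x => (x.2.1, (x.1, x.2.2))) (fun x => (x.2.1, (x.1, x.2.2))) := rfl

lemma bapp_posSemidef [DecidableEq γ] {D : Mat α →ₗ[ℂ] Mat β}
    (hD : IsCompletelyPositive D) {M : Mat (γ × α)} (hM : M.PosSemidef) :
    (bapp D M).PosSemidef := by
  classical
  let e := Fintype.equivFin γ
  have h : bapp D M = (amp (Fintype.card γ) D
      (M.submatrix (Prod.map e.symm id) (Prod.map e.symm id))).submatrix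
      (Prod.map e id) (Prod.map e id) := by
    ext pq rs
    simp [bapp, amp, Prod.map]
  rw [h]
  exact (hD _ _ (hM.submatrix _)).submatrix _

lemma sapp_posSemidef [DecidableEq γ] {D : Mat α →ₗ[ℂ] Mat β}
    (hD : IsCompletelyPositive D) {M : Mat (α × γ)} (hM : M.PosSemidef) :
    (sapp D M).PosSemidef := by
  have h : sapp D M
      = (bapp D (M.submatrix Prod.swap Prod.swap)).submatrix Prod.swap Prod.swap := rfl
  rw [h]
  exact (bapp_posSemidef hD (hM.submatrix _)).submatrix _

lemma cp_bappL [DecidableEq γ] {D : Mat α →ₗ[ℂ] Mat β} (hD : IsCompletelyPositive D) :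
    IsCompletelyPositive (bappL (γ := γ) D) := by
  intro n M hM
  have h : amp n (bappL (γ := γ) D) M =
      (bapp (γ := Fin n × γ) D
        (M.submatrix (fun x => (x.1.1, (x.1.2, x.2))) (fun x => (x.1.1, (x.1.2, x.2))))).submatrix
        (fun x => ((x.1, x.2.1), x.2.2)) (fun x => ((x.1, x.2.1), x.2.2)) := rfl
  rw [h]
  exact (bapp_posSemidef hD (hM.submatrix _)).submatrix _

lemma cp_sappL [DecidableEq γ] {D : Mat α →ₗ[ℂ] Mat β} (hD : IsCompletelyPositive D) :
    IsCompletelyPositive (sappL (γ := γ) D) := by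
  intro n M hM
  have h : amp n (sappL (γ := γ) D) M =
      (sapp (γ := Fin n × γ) D
        (M.submatrix (fun x => (x.2.1, (x.1, x.2.2))) (fun x => (x.2.1, (x.1, x.2.2))))).submatrix
        (fun x => (x.2.1, (x.1, x.2.2))) (fun x => (x.2.1, (x.1, x.2.2))) := rfl
  rw [h]
  exact (sapp_posSemidef hD (hM.submatrix _)).submatrix _

variable {D : Mat α →ₗ[ℂ] Mat β}

lemma trace_bapp (hD : ∀ M : Mat α, (D M).trace = M.trace) (M : Mat (γ × α)) :
    (bapp D M).trace = M.trace := by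
  simp only [Matrix.trace, Matrix.diag, bapp, Matrix.of_apply]
  rw [Fintype.sum_prod_type]
  conv_rhs => rw [Fintype.sum_prod_type]
  refine Finset.sum_congr rfl fun g _ => ?_
  simpa [Matrix.trace, Matrix.diag] using hD (Matrix.of fun i j => M (g, i) (g, j))

lemma trace_sapp (hD : ∀ M : Mat α, (D M).trace = M.trace) (M : Mat (α × γ)) :
    (sapp D M).trace = M.trace := by
  simp only [Matrix.trace, Matrix.diag, sapp, Matrix.of_apply]
  rw [Fintype.sum_prod_type_right]
  conv_rhs => rw [Fintype.sum_prod_type_right]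
  refine Finset.sum_congr rfl fun g _ => ?_
  simpa [Matrix.trace, Matrix.diag] using hD (Matrix.of fun i j => M (i, g) (j, g))

lemma ptr2_bapp (hD : ∀ M : Mat α, (D M).trace = M.trace) (M : Mat (γ × α)) :
    ptr2 (bapp D M) = ptr2 M := by
  ext g h
  simp only [ptr2, bapp, Matrix.of_apply]
  simpa [Matrix.trace, Matrix.diag] using hD (Matrix.of fun i j => M (g, i) (h, j))

lemma ptr1_sapp (hD : ∀ M : Mat α, (D M).trace = M.trace) (M : Mat (α × γ)) :
    ptr1 (sapp D M) = ptr1 M := by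
  ext g h
  simp only [ptr1, sapp, Matrix.of_apply]
  simpa [Matrix.trace, Matrix.diag] using hD (Matrix.of fun i j => M (i, g) (j, h))

lemma ptr1_bapp (D : Mat α →ₗ[ℂ] Mat β) (M : Mat (γ × α)) :
    ptr1 (bapp D M) = D (ptr1 M) := by
  have h : ptr1 M = ∑ g : γ, Matrix.of fun i j => M (g, i) (g, j) := by
    ext i j
    simp [ptr1, Matrix.sum_apply]
  rw [h, map_sum]
  ext i j
  simp [ptr1, bapp, Matrix.sum_apply]

lemma ptr2_sapp (D : Mat α →ₗ[ℂ] Mat β) (M : Mat (α × γ)) :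
    ptr2 (sapp D M) = D (ptr2 M) := by
  have h : ptr2 M = ∑ g : γ, Matrix.of fun i j => M (i, g) (j, g) := by
    ext i j
    simp [ptr2, Matrix.sum_apply]
  rw [h, map_sum]
  ext i j
  simp [ptr2, sapp, Matrix.sum_apply]

lemma apply_posSemidef (hD : IsCompletelyPositive D) {ρ : Mat α} (hρ : ρ.PosSemidef) :
    (D ρ).PosSemidef := by
  have h2 := hD 1 (ρ.submatrix (Prod.snd : Fin 1 × α → α) Prod.snd) (hρ.submatrix _)
  have h : D ρ = (amp 1 D (ρ.submatrix Prod.snd Prod.snd)).submatrix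
      (fun a => ((0 : Fin 1), a)) (fun a => ((0 : Fin 1), a)) := rfl
  rw [h]
  exact h2.submatrix _

local notation "K" => starRingEnd ℂ

noncomputable def pstate (w : Fin 2 → ℂ) : Mat (Fin 2) :=
  Matrix.of fun i j => w i * K (w j)

lemma pstate_posSemidef (w : Fin 2 → ℂ) : (pstate w).PosSemidef := by
  rw [Matrix.posSemidef_iff_dotProduct_mulVec]
  constructor
  · ext i j
    simp [pstate, Matrix.conjTranspose_apply, mul_comm]
  · intro x
    have h : (pstate w) *ᵥ x = (star w ⬝ᵥ x) • w := by
      funext i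
      simp [pstate, Matrix.mulVec, dotProduct, Fin.sum_univ_two, Complex.star_def]
      ring
    rw [h]
    have h2 : star x ⬝ᵥ ((star w ⬝ᵥ x) • w) = (star w ⬝ᵥ x) * star (star w ⬝ᵥ x) := by
      simp [dotProduct, Fin.sum_univ_two, Complex.star_def]
      ring
    rw [h2]
    exact mul_star_self_nonneg _

lemma pstate_trace (w : Fin 2 → ℂ) (hw : K (w 0) * w 0 + K (w 1) * w 1 = 1) :
    (pstate w).trace = 1 := by
  simp [Matrix.trace, Matrix.diag, pstate, Fin.sum_univ_two]
  linear_combination hw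

lemma pure_marginal (w : Fin 2 → ℂ) (hw : K (w 0) * w 0 + K (w 1) * w 1 = 1)
    (σ : Mat (Fin 2 × Fin 2)) (hσ : σ.PosSemidef) (htr : σ.trace = 1)
    (h2 : ptr2 σ = pstate w) (h1 : ptr1 σ = pstate w) :
    σ = Matrix.of fun p q => (w p.1 * w p.2) * K (w q.1 * w q.2) := by
  -- orthogonal complement vector
  set v : Fin 2 → ℂ := ![K (w 1), -(K (w 0))] with hv
  have hcomp : ∀ p r : Fin 2, K (w p) * w r + K (v p) * v r
      = if p = r then 1 else 0 := by
    simp only [Fin.forall_fin_two]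
    refine ⟨⟨?_, ?_⟩, ?_, ?_⟩ <;> simp [hv]
    all_goals first
    | linear_combination hw
    | ring
  have hvw0 : K (w 0) * v 0 + K (w 1) * v 1 = 0 := by
    simp [hv]; ring
  -- both marginals kill v
  have hmv : ∀ (τ : Mat (Fin 2)), τ = pstate w → star v ⬝ᵥ τ *ᵥ v = 0 := by
    intro τ hτ
    subst hτ
    simp [pstate, dotProduct, Matrix.mulVec, Fin.sum_univ_two, Complex.star_def]
    linear_combination (K (v 0) * w 0 + K (v 1) * w 1) * hvw0
  -- kernel vectors
  set A : Fin 2 → (Fin 2 × Fin 2 → ℂ) :=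
    fun k => fun t => v t.1 * (if t.2 = k then 1 else 0) with hA
  set B : Fin 2 → (Fin 2 × Fin 2 → ℂ) :=
    fun k => fun t => (if t.1 = k then 1 else 0) * v t.2 with hB
  -- σ kills the kernel vectors A k (via ptr2) and B k (via ptr1)
  have two_nonneg_zero : ∀ a b : ℂ, 0 ≤ a → 0 ≤ b → a + b = 0 → a = 0 ∧ b = 0 := by
    intro a b ha hb hab
    constructor
    · refine le_antisymm ?_ ha
      calc a ≤ a + b := le_add_of_nonneg_right hb
        _ = 0 := hab
    · refine le_antisymm ?_ hb
      calc b ≤ a + b := le_add_of_nonneg_left ha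
        _ = 0 := hab
  have hAker : σ *ᵥ A 0 = 0 ∧ σ *ᵥ A 1 = 0 := by
    have hsum : (star (A 0) ⬝ᵥ σ *ᵥ A 0) + (star (A 1) ⬝ᵥ σ *ᵥ A 1)
        = star v ⬝ᵥ (ptr2 σ) *ᵥ v := by
      simp [hA, ptr2, dotProduct, Matrix.mulVec, Fintype.sum_prod_type, Fin.sum_univ_two,
        Complex.star_def]
      ring
    have h0 := two_nonneg_zero _ _ (hσ.dotProduct_mulVec_nonneg (A 0)) (hσ.dotProduct_mulVec_nonneg (A 1)) (hsum.trans (hmv _ h2))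
    exact ⟨(hσ.dotProduct_mulVec_zero_iff _).mp h0.1, (hσ.dotProduct_mulVec_zero_iff _).mp h0.2⟩
  have hBker : σ *ᵥ B 0 = 0 ∧ σ *ᵥ B 1 = 0 := by
    have hsum : (star (B 0) ⬝ᵥ σ *ᵥ B 0) + (star (B 1) ⬝ᵥ σ *ᵥ B 1)
        = star v ⬝ᵥ (ptr1 σ) *ᵥ v := by
      simp [hB, ptr1, dotProduct, Matrix.mulVec, Fintype.sum_prod_type, Fin.sum_univ_two,
        Complex.star_def]
      ring
    have h0 := two_nonneg_zero _ _ (hσ.dotProduct_mulVec_nonneg (B 0)) (hσ.dotProduct_mulVec_nonneg (B 1)) (hsum.trans (hmv _ h1))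
    exact ⟨(hσ.dotProduct_mulVec_zero_iff _).mp h0.1, (hσ.dotProduct_mulVec_zero_iff _).mp h0.2⟩
  -- σ kills everything orthogonal to w ⊗ w
  have hwv : σ *ᵥ (fun t : Fin 2 × Fin 2 => w t.1 * v t.2) = 0 := by
    have hx : (fun t : Fin 2 × Fin 2 => w t.1 * v t.2) = w 0 • B 0 + w 1 • B 1 := by
      funext t
      obtain ⟨a, b⟩ := t
      have hfa : ∀ a : Fin 2, w a * v b
          = w 0 * ((if a = 0 then (1:ℂ) else 0) * v b)
            + w 1 * ((if a = 1 then (1:ℂ) else 0) * v b) := by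
        simp only [Fin.forall_fin_two]
        constructor <;> simp
      simpa [hB] using hfa a
    rw [hx, Matrix.mulVec_add, Matrix.mulVec_smul, Matrix.mulVec_smul,
      hBker.1, hBker.2, smul_zero, smul_zero, add_zero]
  have hvw : σ *ᵥ (fun t : Fin 2 × Fin 2 => v t.1 * w t.2) = 0 := by
    have hx : (fun t : Fin 2 × Fin 2 => v t.1 * w t.2) = w 0 • A 0 + w 1 • A 1 := by
      funext t
      obtain ⟨a, b⟩ := t
      have hfb : ∀ b : Fin 2, v a * w b
          = w 0 * (v a * (if b = 0 then (1:ℂ) else 0))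
            + w 1 * (v a * (if b = 1 then (1:ℂ) else 0)) := by
        simp only [Fin.forall_fin_two]
        constructor <;> simp <;> ring
      simpa [hA] using hfb b
    rw [hx, Matrix.mulVec_add, Matrix.mulVec_smul, Matrix.mulVec_smul,
      hAker.1, hAker.2, smul_zero, smul_zero, add_zero]
  have hvv : σ *ᵥ (fun t : Fin 2 × Fin 2 => v t.1 * v t.2) = 0 := by
    have hx : (fun t : Fin 2 × Fin 2 => v t.1 * v t.2) = v 0 • A 0 + v 1 • A 1 := by
      funext t
      obtain ⟨a, b⟩ := t
      have hfb : ∀ b : Fin 2, v a * v b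
          = v 0 * (v a * (if b = 0 then (1:ℂ) else 0))
            + v 1 * (v a * (if b = 1 then (1:ℂ) else 0)) := by
        simp only [Fin.forall_fin_two]
        constructor <;> simp <;> ring
      simpa [hA] using hfb b
    rw [hx, Matrix.mulVec_add, Matrix.mulVec_smul, Matrix.mulVec_smul,
      hAker.1, hAker.2, smul_zero, smul_zero, add_zero]
  -- every column of σ is proportional to σ (w ⊗ w)
  set W4 : Fin 2 × Fin 2 → ℂ := fun t => w t.1 * w t.2 with hW4
  have hcol : ∀ p q r s : Fin 2, σ (p, q) (r, s) = K (w r * w s) * (σ *ᵥ W4) (p, q) := by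
    intro p q r s
    have hbasis : (fun t : Fin 2 × Fin 2 => if t = (r, s) then (1:ℂ) else 0)
        = K (w r * w s) • W4
          + (K (w r) * K (v s)) • (fun t : Fin 2 × Fin 2 => w t.1 * v t.2)
          + (K (v r) * K (w s)) • (fun t : Fin 2 × Fin 2 => v t.1 * w t.2)
          + (K (v r) * K (v s)) • (fun t : Fin 2 × Fin 2 => v t.1 * v t.2) := by
      funext t
      obtain ⟨a, b⟩ := t
      have e1 := hcomp r a
      have e2 := hcomp s b
      have e3 : (if ((a : Fin 2), (b : Fin 2)) = (r, s) then (1:ℂ) else 0)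
          = (if r = a then (1:ℂ) else 0) * (if s = b then (1:ℂ) else 0) := by
        fin_cases a <;> fin_cases b <;> fin_cases r <;> fin_cases s <;> simp [Prod.ext_iff] <;> try decide
      simp only [Pi.add_apply, Pi.smul_apply, smul_eq_mul, hW4, _root_.map_mul]
      rw [e3, ← e1, ← e2]
      ring
    have happ := congrArg (fun x => σ *ᵥ x) hbasis
    simp only [Matrix.mulVec_add, Matrix.mulVec_smul, hwv, hvw, hvv, smul_zero, add_zero] at happ
    have hl : (σ *ᵥ fun t : Fin 2 × Fin 2 => if t = (r, s) then (1:ℂ) else 0) (p, q)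
        = σ (p, q) (r, s) := by
      simp [Matrix.mulVec, dotProduct, mul_ite, mul_one, mul_zero]
    have := congrFun happ (p, q)
    rw [hl] at this
    simpa [_root_.map_mul] using this
  -- the trace normalizes σ (w ⊗ w)
  have htru : ∑ t : Fin 2 × Fin 2, K (W4 t) * (σ *ᵥ W4) t = 1 := by
    have h : σ.trace = ∑ t : Fin 2 × Fin 2, K (W4 t) * (σ *ᵥ W4) t := by
      simp only [Matrix.trace, Matrix.diag]
      refine Finset.sum_congr rfl fun t _ => ?_
      have h := hcol t.1 t.2 t.1 t.2
      rw [Prod.mk.eta] at h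
      rw [h, hW4]
    rw [← h, htr]
  -- Hermitian symmetry gives σ (w ⊗ w) = w ⊗ w
  have hueq : ∀ t : Fin 2 × Fin 2, (σ *ᵥ W4) t = W4 t := by
    intro t
    have hsym : ∀ s : Fin 2 × Fin 2, σ t s = W4 t * K ((σ *ᵥ W4) s) := by
      intro s
      have h1' := hσ.1.apply t s
      have h2' := hcol s.1 s.2 t.1 t.2
      rw [Prod.mk.eta, Prod.mk.eta] at h2'
      rw [← h1', h2']
      simp [Complex.star_def, _root_.map_mul, hW4, mul_comm]
    calc (σ *ᵥ W4) t = ∑ s : Fin 2 × Fin 2, σ t s * W4 s := by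
          simp [Matrix.mulVec, dotProduct]
      _ = ∑ s : Fin 2 × Fin 2, W4 t * (K ((σ *ᵥ W4) s) * W4 s) := by
          refine Finset.sum_congr rfl fun s _ => ?_
          rw [hsym s]; ring
      _ = W4 t * ∑ s : Fin 2 × Fin 2, K ((σ *ᵥ W4) s) * W4 s := by
          rw [Finset.mul_sum]
      _ = W4 t * K (∑ s : Fin 2 × Fin 2, K (W4 s) * (σ *ᵥ W4) s) := by
          congr 1
          rw [map_sum]
          refine Finset.sum_congr rfl fun s _ => ?_
          simp [_root_.map_mul, Complex.conj_conj]
          ring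
      _ = W4 t := by rw [htru]; simp
  -- conclude
  ext t t'
  obtain ⟨p, q⟩ := t
  obtain ⟨r, s⟩ := t'
  rw [hcol p q r s, hueq]
  simp [hW4, _root_.map_mul]
  ring

lemma no_broadcast :
    ¬ ∃ D : Mat (Fin 2) →ₗ[ℂ] Mat (Fin 2 × Fin 2),
        IsQChannel D ∧
        ∀ ρ : Mat (Fin 2), ρ.PosSemidef → ρ.trace = 1 →
          ptr2 (D ρ) = ρ ∧ ptr1 (D ρ) = ρ := by
  rintro ⟨D, ⟨hCP, hTP⟩, hbr⟩
  set c : ℂ := ((Real.sqrt 2 : ℝ) : ℂ)⁻¹ with hc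
  have hKc : K c = c := by
    rw [hc]
    simp [← Complex.ofReal_inv, Complex.conj_ofReal]
  have hc2 : c * c = 1 / 2 := by
    rw [hc, ← mul_inv]
    norm_num [← Complex.ofReal_mul, Real.mul_self_sqrt]
  -- the four pure states
  have key : ∀ w : Fin 2 → ℂ, K (w 0) * w 0 + K (w 1) * w 1 = 1 →
      D (pstate w) = Matrix.of fun p q => (w p.1 * w p.2) * K (w q.1 * w q.2) := by
    intro w hw
    have hps := pstate_posSemidef w
    have htr := pstate_trace w hw
    obtain ⟨hm2, hm1⟩ := hbr (pstate w) hps htr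
    exact pure_marginal w hw (D (pstate w)) (apply_posSemidef hCP hps)
      ((hTP _).trans htr) hm2 hm1
  have h0 := key ![1, 0] (by simp)
  have h1 := key ![0, 1] (by simp)
  have hp := key ![c, c] (by
    simp [hKc]
    linear_combination 2 * hc2)
  have hm := key ![c, -c] (by
    simp [hKc]
    linear_combination 2 * hc2)
  have hlin : pstate ![c, -c] = pstate ![1, 0] + pstate ![0, 1] - pstate ![c, c] := by
    ext i j
    fin_cases i <;> fin_cases j <;>
      simp [pstate, hKc, Matrix.add_apply, Matrix.sub_apply] <;>
      linear_combination 2 * hc2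
  have hDlin := congrFun (congrFun (by rw [hlin, map_sub, map_add] :
      D (pstate ![c, -c]) = D (pstate ![1, 0]) + D (pstate ![0, 1]) - D (pstate ![c, c]))
      ((0, 0) : Fin 2 × Fin 2)) ((0, 0) : Fin 2 × Fin 2)
  rw [hm, h0, h1, hp] at hDlin
  simp [Matrix.add_apply, Matrix.sub_apply, hKc, _root_.map_mul] at hDlin
  refine absurd ?_ (by norm_num : (1:ℂ)/4 ≠ 3/4)
  linear_combination hDlin - (2*c*c + 1) * hc2

end NB

/-- there is no broadcasting channel for a qubit, and consequently
no two left-invertible channels with qubit input are strongly compatible. -/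
theorem no_qubit_broadcasting_and_no_strongCompat_leftInvertible :
    (¬ ∃ D : Mat (Fin 2) →ₗ[ℂ] Mat (Fin 2 × Fin 2),
        IsQChannel D ∧
        ∀ ρ : Mat (Fin 2), ρ.PosSemidef → ρ.trace = 1 →
          ptr2 (D ρ) = ρ ∧ ptr1 (D ρ) = ρ) ∧
    (∀ (b c : ℕ)
        (V : Mat (Fin 2) →ₗ[ℂ] Mat (Fin b))
        (W : Mat (Fin 2) →ₗ[ℂ] Mat (Fin c)),
      IsQChannel V → IsQChannel W →
      QLeftInvertible V → QLeftInvertible W →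
      ¬ ∃ C : Mat (Fin 2) →ₗ[ℂ] Mat (Fin b × Fin c),
          IsQChannel C ∧ (∀ ρ, ptr2 (C ρ) = V ρ) ∧ (∀ ρ, ptr1 (C ρ) = W ρ)) := by
  constructor
  · exact NB.no_broadcast
  · rintro b c V W hV hW ⟨Vt, hVt, hVtV⟩ ⟨Wt, hWt, hWtW⟩ ⟨C, hC, hCV, hCW⟩
    apply NB.no_broadcast
    refine ⟨NB.bappL Wt ∘ₗ (NB.sappL Vt ∘ₗ C), ⟨?_, ?_⟩, ?_⟩
    · exact NB.cp_comp (NB.cp_bappL hWt.1) (NB.cp_comp (NB.cp_sappL hVt.1) hC.1)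
    · intro M
      show (NB.bapp Wt (NB.sapp Vt (C M))).trace = M.trace
      rw [NB.trace_bapp hWt.2, NB.trace_sapp hVt.2, hC.2]
    · intro ρ _ _
      constructor
      · show ptr2 (NB.bapp Wt (NB.sapp Vt (C ρ))) = ρ
        rw [NB.ptr2_bapp hWt.2, NB.ptr2_sapp, hCV, hVtV]
      · show ptr1 (NB.bapp Wt (NB.sapp Vt (C ρ))) = ρ
        rw [NB.ptr1_bapp, NB.ptr1_sapp hVt.2, hCW, hWtW]
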